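/- Concavity of the reduced k-means objective: the function Γ ↦ Σ_{j=1}^k ‖Σᵢ Γᵢⱼ xᵢ‖² / (Σᵢ Γᵢⱼ) is convex on the convex set of real n×k matrices all of whose column sums are positive; equivalently, G(Γ) = c₀ − Σⱼ ‖Σᵢ Γᵢⱼ xᵢ‖²/(Σᵢ Γᵢⱼ) is concave on this set. -/

import Mathlib

open Finset

noncomputable section

lemma perspective_ineq {E : Type*} [NormedAddCommGroup E] [InnerProductSpace ℝ E]
    (u v : E) (s t α β : ℝ) (hs : 0 < s) (ht : 0 < t) (hα : 0 ≤ α) (hβ : 0 ≤ β)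
    (hab : α + β = 1) :
    ‖α • u + β • v‖ ^ 2 / (α * s + β * t) ≤ α * (‖u‖ ^ 2 / s) + β * (‖v‖ ^ 2 / t) := by
  have hst : 0 < α * s + β * t := by
    rcases eq_or_lt_of_le hα with h | h
    · rw [← h] at hab ⊢; simp at hab; nlinarith
    · nlinarith [mul_nonneg hβ ht.le]
  set A := ‖u‖ ^ 2 / s with hA
  set B := ‖v‖ ^ 2 / t with hB
  have hu : ‖u‖ ^ 2 = A * s := by rw [hA, div_mul_cancel₀ _ hs.ne']
  have hv : ‖v‖ ^ 2 = B * t := by rw [hB, div_mul_cancel₀ _ ht.ne']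
  have expand1 : ‖α • u + β • v‖ ^ 2
      = α ^ 2 * (A * s) + 2 * (α * β) * (inner ℝ u v : ℝ) + β ^ 2 * (B * t) := by
    rw [norm_add_sq_real, ← hu, ← hv]
    simp [norm_smul, real_inner_smul_left, real_inner_smul_right,
      abs_of_nonneg hα, abs_of_nonneg hβ]
    ring
  have key : (0:ℝ) ≤ ‖t • u - s • v‖ ^ 2 := sq_nonneg _
  have expand2 : ‖t • u - s • v‖ ^ 2
      = t ^ 2 * (A * s) - 2 * (s * t) * (inner ℝ u v : ℝ) + s ^ 2 * (B * t) := by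
    rw [norm_sub_sq_real, ← hu, ← hv]
    simp [norm_smul, real_inner_smul_left, real_inner_smul_right,
      abs_of_pos hs, abs_of_pos ht]
    ring
  rw [expand2] at key
  have h3 : 0 ≤ A * t + B * s - 2 * (inner ℝ u v : ℝ) := by nlinarith [mul_pos hs ht]
  rw [div_le_iff₀ hst, expand1]
  nlinarith [mul_nonneg (mul_nonneg hα hβ) h3]

/-- Concavity of the reduced k-means objective: the map
`Γ ↦ Σⱼ ‖Σᵢ Γᵢⱼ xᵢ‖² / (Σᵢ Γᵢⱼ)` is convex on the convex set of real `n×k` matrices with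
positive column sums; equivalently `G(Γ) = c₀ − Σⱼ ‖Σᵢ Γᵢⱼ xᵢ‖²/(Σᵢ Γᵢⱼ)` is concave
there. -/
theorem kmeans_objective_concave (n k d : ℕ) (x : Fin n → EuclideanSpace ℝ (Fin d)) :
    Convex ℝ {Γ : Matrix (Fin n) (Fin k) ℝ | ∀ j, 0 < ∑ i, Γ i j} ∧
    ConvexOn ℝ {Γ : Matrix (Fin n) (Fin k) ℝ | ∀ j, 0 < ∑ i, Γ i j}
      (fun Γ => ∑ j, ‖∑ i, Γ i j • x i‖ ^ 2 / (∑ i, Γ i j)) ∧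
    ConcaveOn ℝ {Γ : Matrix (Fin n) (Fin k) ℝ | ∀ j, 0 < ∑ i, Γ i j}
      (fun Γ => (∑ i, ‖x i‖ ^ 2) - ∑ j, ‖∑ i, Γ i j • x i‖ ^ 2 / (∑ i, Γ i j)) := by
  have hconv : Convex ℝ {Γ : Matrix (Fin n) (Fin k) ℝ | ∀ j, 0 < ∑ i, Γ i j} := by
    intro Γ hΓ Δ hΔ a b ha hb hab j
    have h1 := hΓ j
    have h2 := hΔ j
    have : ∑ i, (a • Γ + b • Δ) i j = a * ∑ i, Γ i j + b * ∑ i, Δ i j := by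
      simp [Matrix.add_apply, Matrix.smul_apply, smul_eq_mul, Finset.sum_add_distrib,
        Finset.mul_sum]
    rw [this]
    rcases eq_or_lt_of_le ha with h | h
    · rw [← h] at hab ⊢; simp at hab; nlinarith
    · nlinarith
  have hcvx : ConvexOn ℝ {Γ : Matrix (Fin n) (Fin k) ℝ | ∀ j, 0 < ∑ i, Γ i j}
      (fun Γ => ∑ j, ‖∑ i, Γ i j • x i‖ ^ 2 / (∑ i, Γ i j)) := by
    refine ⟨hconv, ?_⟩
    intro Γ hΓ Δ hΔ a b ha hb hab
    simp only [smul_eq_mul]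
    rw [Finset.mul_sum, Finset.mul_sum, ← Finset.sum_add_distrib]
    refine Finset.sum_le_sum fun j _ => ?_
    have hvec : ∑ i, (a • Γ + b • Δ) i j • x i
        = a • (∑ i, Γ i j • x i) + b • (∑ i, Δ i j • x i) := by
      rw [Finset.smul_sum, Finset.smul_sum, ← Finset.sum_add_distrib]
      refine Finset.sum_congr rfl fun i _ => ?_
      simp [Matrix.add_apply, Matrix.smul_apply, add_smul, smul_smul]
    have hsum : ∑ i, (a • Γ + b • Δ) i j = a * ∑ i, Γ i j + b * ∑ i, Δ i j := by
      simp [Matrix.add_apply, Matrix.smul_apply, smul_eq_mul, Finset.sum_add_distrib,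
        Finset.mul_sum]
    rw [hvec, hsum]
    exact perspective_ineq _ _ _ _ _ _ (hΓ j) (hΔ j) ha hb hab
  exact ⟨hconv, hcvx, (concaveOn_const _ hconv).sub hcvx⟩
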